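/- arXiv:2112.09315 — 2 statements merged into one kernel-verified Lean document; each statement's English description precedes it below -/
import Mathlib

section
/- (Policy improvement.) Let μ and μ' be stationary deterministic policies such that T_{μ'} J_μ = T J_μ (μ' is greedy with respect to J_μ). Then J_{μ'}(x) ≤ J_μ(x) for every x ∈ S. -/
/-- The Bellman operator `T` of the finite discounted MDP. -/
noncomputable def Tbell {S A : Type*} [Fintype S] [Fintype A] [Nonempty A]
    (P : S → A → S → ℝ) (g : S → A → ℝ) (α : ℝ) (J : S → ℝ) : S → ℝ :=
  fun x => Finset.univ.inf' Finset.univ_nonempty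
    (fun a : A => g x a + α * ∑ y, P x a y * J y)

/-- The one-stage DP operator `T_μ` for a stationary deterministic policy `μ`. -/
noncomputable def Tpol {S A : Type*} [Fintype S]
    (P : S → A → S → ℝ) (g : S → A → ℝ) (α : ℝ) (μ : S → A) (J : S → ℝ) : S → ℝ :=
  fun x => g x (μ x) + α * ∑ y, P x (μ x) y * J y

/-- The transition matrix `P_μ` of a stationary deterministic policy `μ`. -/
def Pmat {S A : Type*} (P : S → A → S → ℝ) (μ : S → A) : Matrix S S ℝ :=
  fun x y => P x (μ x) y

/-- The stage-cost vector `g_μ` of a stationary deterministic policy `μ`. -/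
def gvec {S A : Type*} (g : S → A → ℝ) (μ : S → A) : S → ℝ :=
  fun x => g x (μ x)

/-- The value function `J_μ(x) = ∑_{t} α^t (P_μ^t g_μ)(x)` of policy `μ`. -/
noncomputable def Jval {S A : Type*} [Fintype S] [DecidableEq S]
    (P : S → A → S → ℝ) (g : S → A → ℝ) (α : ℝ) (μ : S → A) : S → ℝ :=
  fun x => ∑' t : ℕ, α ^ t * ((Pmat P μ ^ t).mulVec (gvec g μ)) x

section Aux
set_option linter.unusedSectionVars false
variable {S : Type*} [Fintype S] [DecidableEq S] [Nonempty S]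

lemma stoch_pow {M : Matrix S S ℝ} (h0 : ∀ x y, 0 ≤ M x y)
    (h1 : ∀ x, ∑ y, M x y = 1) (t : ℕ) :
    (∀ x y, 0 ≤ (M ^ t) x y) ∧ (∀ x, ∑ y, (M ^ t) x y = 1) := by
  induction t with
  | zero =>
    constructor
    · intro x y; simp [Matrix.one_apply]; positivity
    · intro x; simp [Matrix.one_apply]
  | succ n ih =>
    constructor
    · intro x y
      rw [pow_succ, Matrix.mul_apply]
      exact Finset.sum_nonneg fun z _ => mul_nonneg (ih.1 x z) (h0 z y)
    · intro x
      simp only [pow_succ, Matrix.mul_apply]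
      rw [Finset.sum_comm]
      calc ∑ z, ∑ y, (M ^ n) x z * M z y = ∑ z, (M ^ n) x z * ∑ y, M z y := by
            simp [Finset.mul_sum]
        _ = 1 := by simp [h1, ih.2]

lemma mulVec_bound {M : Matrix S S ℝ} (h0 : ∀ x y, 0 ≤ M x y)
    (h1 : ∀ x, ∑ y, M x y = 1) {v : S → ℝ} {C : ℝ} (hv : ∀ x, |v x| ≤ C) (x : S) :
    |M.mulVec v x| ≤ C := by
  calc |M.mulVec v x| = |∑ y, M x y * v y| := by rw [Matrix.mulVec, dotProduct]
    _ ≤ ∑ y, |M x y * v y| := Finset.abs_sum_le_sum_abs _ _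
    _ ≤ ∑ y, M x y * C := by
        refine Finset.sum_le_sum fun y _ => ?_
        rw [abs_mul, abs_of_nonneg (h0 x y)]
        exact mul_le_mul_of_nonneg_left (hv y) (h0 x y)
    _ = C := by rw [← Finset.sum_mul, h1 x, one_mul]

lemma exists_bound (v : S → ℝ) : ∃ C : ℝ, 0 ≤ C ∧ ∀ x, |v x| ≤ C := by
  refine ⟨Finset.univ.sup' Finset.univ_nonempty (fun x => |v x|), ?_, ?_⟩
  · obtain ⟨x⟩ := ‹Nonempty S›
    exact le_trans (abs_nonneg (v x)) (Finset.le_sup' (fun x => |v x|) (Finset.mem_univ x))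
  · intro x; exact Finset.le_sup' (fun x => |v x|) (Finset.mem_univ x)

lemma summable_term {M : Matrix S S ℝ} (h0 : ∀ x y, 0 ≤ M x y)
    (h1 : ∀ x, ∑ y, M x y = 1) (v : S → ℝ) {α : ℝ} (hα0 : 0 ≤ α) (hα1 : α < 1) (x : S) :
    Summable (fun t : ℕ => α ^ t * ((M ^ t).mulVec v) x) := by
  obtain ⟨C, hC0, hC⟩ := exists_bound v
  refine Summable.of_norm_bounded (g := fun t => C * α ^ t)
    ((summable_geometric_of_lt_one hα0 hα1).mul_left C) (fun t => ?_)
  rw [Real.norm_eq_abs, abs_mul, abs_pow, abs_of_nonneg hα0]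
  calc α ^ t * |(M ^ t).mulVec v x| ≤ α ^ t * C :=
        mul_le_mul_of_nonneg_left
          (mulVec_bound (stoch_pow h0 h1 t).1 (stoch_pow h0 h1 t).2 hC x) (pow_nonneg hα0 t)
    _ = C * α ^ t := mul_comm _ _

end Aux

lemma Jval_fp {S A : Type*} [Fintype S] [Nonempty S] [DecidableEq S]
    (P : S → A → S → ℝ) (g : S → A → ℝ) {α : ℝ}
    (hP0 : ∀ x a y, 0 ≤ P x a y) (hP1 : ∀ x a, ∑ y, P x a y = 1)
    (hα0 : 0 ≤ α) (hα1 : α < 1) (μ : S → A) (x : S) :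
    Jval P g α μ x = g x (μ x) + α * ∑ y, P x (μ x) y * Jval P g α μ y := by
  set M : Matrix S S ℝ := Pmat P μ with hM
  set v : S → ℝ := gvec g μ with hv
  have h0 : ∀ x y, 0 ≤ M x y := fun x y => hP0 x (μ x) y
  have h1 : ∀ x, ∑ y, M x y = 1 := fun x => hP1 x (μ x)
  have hs : ∀ z, Summable (fun t : ℕ => α ^ t * ((M ^ t).mulVec v) z) :=
    fun z => summable_term h0 h1 v hα0 hα1 z
  have key : ∀ t : ℕ, α ^ (t+1) * ((M ^ (t+1)).mulVec v) x
      = ∑ y, (α * M x y) * (α ^ t * ((M ^ t).mulVec v) y) := by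
    intro t
    rw [pow_succ' M t, ← Matrix.mulVec_mulVec]
    rw [show M.mulVec ((M ^ t).mulVec v) x = ∑ y, M x y * ((M ^ t).mulVec v) y from rfl]
    rw [Finset.mul_sum]
    exact Finset.sum_congr rfl fun y _ => by ring
  calc Jval P g α μ x = α ^ 0 * ((M ^ 0).mulVec v) x
        + ∑' t : ℕ, α ^ (t+1) * ((M ^ (t+1)).mulVec v) x := (hs x).tsum_eq_zero_add
    _ = v x + ∑' t : ℕ, ∑ y, (α * M x y) * (α ^ t * ((M ^ t).mulVec v) y) := by
        rw [tsum_congr key]; simp [Matrix.one_mulVec]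
    _ = v x + ∑ y, (α * M x y) * ∑' t : ℕ, α ^ t * ((M ^ t).mulVec v) y := by
        rw [Summable.tsum_finsetSum (fun y _ => ((hs y).mul_left _))]
        congr 1
        exact Finset.sum_congr rfl fun y _ => tsum_mul_left
    _ = g x (μ x) + α * ∑ y, P x (μ x) y * Jval P g α μ y := by
        rw [Finset.mul_sum]
        congr 1
        refine Finset.sum_congr rfl fun y _ => ?_
        rw [show Jval P g α μ y = ∑' t : ℕ, α ^ t * ((M ^ t).mulVec v) y from rfl,
          show M x y = P x (μ x) y from rfl]
        ring

theorem stmt_12 {S A : Type*} [Fintype S] [Nonempty S] [DecidableEq S] [Fintype A] [Nonempty A]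
    (P : S → A → S → ℝ) (g : S → A → ℝ) (α : ℝ)
    (hP0 : ∀ x a y, 0 ≤ P x a y) (hP1 : ∀ x a, ∑ y, P x a y = 1)
    (hα0 : 0 < α) (hα1 : α < 1)
    (μ μ' : S → A)
    (hgreedy : Tpol P g α μ' (Jval P g α μ) = Tbell P g α (Jval P g α μ)) :
    ∀ x : S, Jval P g α μ' x ≤ Jval P g α μ x := by
  intro x
  set J : S → ℝ := Jval P g α μ with hJ
  set M : Matrix S S ℝ := Pmat P μ' with hM
  set v : S → ℝ := gvec g μ' with hv
  have h0 : ∀ x y, 0 ≤ M x y := fun x y => hP0 x (μ' x) y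
  have h1 : ∀ x, ∑ y, M x y = 1 := fun x => hP1 x (μ' x)
  -- T_{μ'} J ≤ J pointwise
  have hle : ∀ z, v z + α * M.mulVec J z ≤ J z := by
    intro z
    have e1 : Tpol P g α μ' J z = Tbell P g α J z := congrFun hgreedy z
    have e2 : Tbell P g α J z ≤ Tpol P g α μ J z :=
      Finset.inf'_le _ (Finset.mem_univ (μ z))
    have e3 : Tpol P g α μ J z = J z :=
      (Jval_fp P g hP0 hP1 hα0.le hα1 μ z).symm
    have e0 : v z + α * M.mulVec J z = Tpol P g α μ' J z := by
      rw [show M.mulVec J z = ∑ y, P z (μ' z) y * J y from rfl]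
      rfl
    rw [e0, e1]
    exact e2.trans_eq e3
  -- monotonicity of M^t
  have mono : ∀ (t : ℕ) (u w : S → ℝ), (∀ z, u z ≤ w z) →
      ∀ z, ((M ^ t).mulVec u) z ≤ ((M ^ t).mulVec w) z := by
    intro t u w huw z
    refine Finset.sum_le_sum fun y _ => ?_
    exact mul_le_mul_of_nonneg_left (huw y) ((stoch_pow h0 h1 t).1 z y)
  -- telescoping bound
  have tel : ∀ N : ℕ, ∑ t ∈ Finset.range N, α ^ t * ((M ^ t).mulVec v) x
      ≤ J x - α ^ N * ((M ^ N).mulVec J) x := by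
    intro N
    induction N with
    | zero => simp [Matrix.one_mulVec]
    | succ n ih =>
      rw [Finset.sum_range_succ]
      have hpow : ((M ^ (n+1)).mulVec J) x = ((M ^ n).mulVec (M.mulVec J)) x := by
        rw [Matrix.mulVec_mulVec, ← pow_succ]
      have lin : ((M ^ n).mulVec (fun z => J z - α * M.mulVec J z)) x
          = ((M ^ n).mulVec J) x - α * ((M ^ n).mulVec (M.mulVec J)) x := by
        show ∑ y, (M ^ n) x y * (J y - α * M.mulVec J y)
          = ∑ y, (M ^ n) x y * J y - α * ∑ y, (M ^ n) x y * (M.mulVec J) y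
        rw [Finset.mul_sum, ← Finset.sum_sub_distrib]
        exact Finset.sum_congr rfl fun y _ => by ring
      have key : ((M ^ n).mulVec v) x ≤ ((M ^ n).mulVec J) x - α * ((M ^ (n+1)).mulVec J) x := by
        rw [hpow, ← lin]
        exact mono n v (fun z => J z - α * M.mulVec J z) (fun z => show v z ≤ J z - α * M.mulVec J z by linarith [hle z]) x
      have h2 := mul_le_mul_of_nonneg_left key (pow_nonneg hα0.le n)
      have e : α ^ n * (((M ^ n).mulVec J) x - α * ((M ^ (n+1)).mulVec J) x)
          = α ^ n * ((M ^ n).mulVec J) x - α ^ (n+1) * ((M ^ (n+1)).mulVec J) x := by ring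
      linarith [h2, e.symm.le, e.le]
  -- take limits
  have hs' : Summable (fun t : ℕ => α ^ t * ((M ^ t).mulVec v) x) :=
    summable_term h0 h1 v hα0.le hα1 x
  have hlim1 : Filter.Tendsto (fun N => ∑ t ∈ Finset.range N, α ^ t * ((M ^ t).mulVec v) x)
      Filter.atTop (nhds (Jval P g α μ' x)) := by
    have := hs'.hasSum.tendsto_sum_nat
    rwa [hs'.hasSum.tsum_eq] at this
  have hzero : Filter.Tendsto (fun N : ℕ => α ^ N * ((M ^ N).mulVec J) x)
      Filter.atTop (nhds 0) := by
    obtain ⟨C, hC0, hC⟩ := exists_bound J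
    refine squeeze_zero_norm (a := fun N => C * α ^ N) (fun N => ?_) ?_
    · show ‖α ^ N * ((M ^ N).mulVec J) x‖ ≤ C * α ^ N
      rw [Real.norm_eq_abs, abs_mul, abs_pow, abs_of_nonneg hα0.le]
      calc α ^ N * |(M ^ N).mulVec J x| ≤ α ^ N * C :=
            mul_le_mul_of_nonneg_left
              (mulVec_bound (stoch_pow h0 h1 N).1 (stoch_pow h0 h1 N).2 hC x)
              (pow_nonneg hα0.le N)
        _ = C * α ^ N := mul_comm _ _
    · have := tendsto_pow_atTop_nhds_zero_of_lt_one hα0.le hα1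
      simpa using this.const_mul C
  have hlim2 : Filter.Tendsto (fun N : ℕ => J x - α ^ N * ((M ^ N).mulVec J) x)
      Filter.atTop (nhds (J x)) := by
    simpa using (tendsto_const_nhds (x := J x)).sub hzero
  exact le_of_tendsto_of_tendsto' hlim1 hlim2 tel
end

section
/- (Strict policy improvement.) Let μ and μ' be stationary deterministic policies such that T_{μ'} J_μ = T J_μ. If J_μ ≠ J*, then J_{μ'} ≤ J_μ pointwise and J_{μ'} ≠ J_μ, i.e., the policy improvement step produces a strictly better policy whenever μ is not optimal. -/
open Finset Matrix

section Aux
variable {S A : Type*} [Fintype S] [DecidableEq S]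
variable {P : S → A → S → ℝ} {g : S → A → ℝ} {α : ℝ} {μ : S → A}

lemma aux_pow_stoch (hP0 : ∀ x a y, 0 ≤ P x a y) (hP1 : ∀ x a, ∑ y, P x a y = 1) (n : ℕ) :
    (∀ x y, 0 ≤ (Pmat P μ ^ n) x y) ∧ (∀ x, ∑ y, (Pmat P μ ^ n) x y = 1) := by
  induction n with
  | zero =>
    constructor
    · intro x y
      simp [Matrix.one_apply]
      split <;> norm_num
    · intro x
      simp [Matrix.one_apply]
  | succ n ih =>
    constructor
    · intro x y
      rw [pow_succ, Matrix.mul_apply]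
      exact Finset.sum_nonneg fun z _ => mul_nonneg (ih.1 x z) (hP0 z (μ z) y)
    · intro x
      simp only [pow_succ, Matrix.mul_apply]
      rw [Finset.sum_comm]
      have : ∀ z, ∑ y, (Pmat P μ ^ n) x z * Pmat P μ z y = (Pmat P μ ^ n) x z := by
        intro z
        rw [← Finset.mul_sum]
        simp [Pmat, hP1]
      simp [this, ih.2 x]

/-- A stochastic matrix times a vector is bounded by any bound on the vector. -/
lemma aux_mulVec_bound {M : Matrix S S ℝ} (hM0 : ∀ x y, 0 ≤ M x y)
    (hM1 : ∀ x, ∑ y, M x y = 1) {v : S → ℝ} {C : ℝ} (hv : ∀ y, |v y| ≤ C) (x : S) :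
    |M.mulVec v x| ≤ C := by
  have : |M.mulVec v x| ≤ ∑ y, M x y * C := by
    refine le_trans (Finset.abs_sum_le_sum_abs _ _) ?_
    refine Finset.sum_le_sum fun y _ => ?_
    rw [abs_mul, abs_of_nonneg (hM0 x y)]
    exact mul_le_mul_of_nonneg_left (hv y) (hM0 x y)
  simpa [← Finset.sum_mul, hM1 x] using this

lemma aux_summable (hP0 : ∀ x a y, 0 ≤ P x a y) (hP1 : ∀ x a, ∑ y, P x a y = 1)
    (hα0 : 0 < α) (hα1 : α < 1) (v : S → ℝ) (x : S) :
    Summable (fun t : ℕ => α ^ t * ((Pmat P μ ^ t).mulVec v) x) := by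
  classical
  set C : ℝ := ∑ y, |v y| with hC
  have hvC : ∀ y, |v y| ≤ C := fun y =>
    Finset.single_le_sum (f := fun y => |v y|) (fun z _ => abs_nonneg _) (Finset.mem_univ y)
  refine Summable.of_norm_bounded (g := fun t => α ^ t * C) ?_ ?_
  · exact (summable_geometric_of_lt_one hα0.le hα1).mul_right C
  · intro t
    have hb := aux_mulVec_bound (aux_pow_stoch (μ := μ) hP0 hP1 t).1
      (aux_pow_stoch (μ := μ) hP0 hP1 t).2 hvC x
    rw [Real.norm_eq_abs, abs_mul, abs_of_nonneg (pow_nonneg hα0.le t)]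
    exact mul_le_mul_of_nonneg_left hb (pow_nonneg hα0.le t)

/-- `Jval` is a fixed point of `Tpol`. -/
lemma aux_Jval_fixed (hP0 : ∀ x a y, 0 ≤ P x a y) (hP1 : ∀ x a, ∑ y, P x a y = 1)
    (hα0 : 0 < α) (hα1 : α < 1) :
    Tpol P g α μ (Jval P g α μ) = Jval P g α μ := by
  funext x
  have hs : Summable (fun t : ℕ => α ^ t * ((Pmat P μ ^ t).mulVec (gvec g μ)) x) :=
    aux_summable hP0 hP1 hα0 hα1 _ x
  have hshift : Jval P g α μ x
      = α ^ 0 * ((Pmat P μ ^ 0).mulVec (gvec g μ)) x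
        + ∑' t : ℕ, α ^ (t + 1) * ((Pmat P μ ^ (t + 1)).mulVec (gvec g μ)) x := by
    simpa [Jval] using hs.tsum_eq_zero_add
  have h0 : α ^ 0 * ((Pmat P μ ^ 0).mulVec (gvec g μ)) x = g x (μ x) := by
    simp [Matrix.one_mulVec, gvec]
  have hterm : ∀ t : ℕ, α ^ (t + 1) * ((Pmat P μ ^ (t + 1)).mulVec (gvec g μ)) x
      = ∑ y, P x (μ x) y * (α * (α ^ t * ((Pmat P μ ^ t).mulVec (gvec g μ)) y)) := by
    intro t
    rw [pow_succ' (Pmat P μ) t, ← Matrix.mulVec_mulVec]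
    rw [Matrix.mulVec, dotProduct, Finset.mul_sum]
    refine Finset.sum_congr rfl fun y _ => ?_
    simp [Pmat, pow_succ]
    ring
  have hsum : ∑' t : ℕ, α ^ (t + 1) * ((Pmat P μ ^ (t + 1)).mulVec (gvec g μ)) x
      = α * ∑ y, P x (μ x) y * Jval P g α μ y := by
    calc ∑' t : ℕ, α ^ (t + 1) * ((Pmat P μ ^ (t + 1)).mulVec (gvec g μ)) x
        = ∑' t : ℕ, ∑ y, P x (μ x) y * (α * (α ^ t * ((Pmat P μ ^ t).mulVec (gvec g μ)) y)) := by
          exact tsum_congr hterm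
      _ = ∑ y, ∑' t : ℕ, P x (μ x) y * (α * (α ^ t * ((Pmat P μ ^ t).mulVec (gvec g μ)) y)) := by
          refine Summable.tsum_finsetSum fun y _ => ?_
          exact ((aux_summable hP0 hP1 hα0 hα1 _ y).mul_left α).mul_left _
      _ = α * ∑ y, P x (μ x) y * Jval P g α μ y := by
          rw [Finset.mul_sum]
          refine Finset.sum_congr rfl fun y _ => ?_
          rw [tsum_mul_left, tsum_mul_left]
          unfold Jval
          ring
  rw [Tpol]
  rw [hshift, h0, hsum]

/-- Comparison: if `Tpol ν J ≤ J` pointwise then `Jval ν ≤ J` pointwise. -/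
lemma aux_comparison (hP0 : ∀ x a y, 0 ≤ P x a y) (hP1 : ∀ x a, ∑ y, P x a y = 1)
    (hα0 : 0 < α) (hα1 : α < 1) {J : S → ℝ}
    (hle : ∀ x, Tpol P g α μ J x ≤ J x) :
    ∀ x, Jval P g α μ x ≤ J x := by
  classical
  set u : S → ℝ := fun x => J x - Jval P g α μ x with hu
  have hfix := aux_Jval_fixed (g := g) (μ := μ) hP0 hP1 hα0 hα1
  have hstep : ∀ x, α * (Pmat P μ).mulVec u x ≤ u x := by
    intro x
    have h1 : Tpol P g α μ J x - Tpol P g α μ (Jval P g α μ) x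
        = α * (Pmat P μ).mulVec u x := by
      simp only [Tpol, Matrix.mulVec, dotProduct, Pmat, hu]
      have hsum : ∑ y, P x (μ x) y * (J y - Jval P g α μ y)
          = (∑ y, P x (μ x) y * J y) - ∑ y, P x (μ x) y * Jval P g α μ y := by
        rw [← Finset.sum_sub_distrib]
        exact Finset.sum_congr rfl fun y _ => by ring
      rw [hsum]
      ring
    have h2 : Tpol P g α μ (Jval P g α μ) x = Jval P g α μ x := by rw [hfix]
    have := hle x
    simp only [hu]
    linarith [h1, h2, hle x]
  have hiter : ∀ n : ℕ, ∀ x, α ^ n * (Pmat P μ ^ n).mulVec u x ≤ u x := by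
    intro n
    induction n with
    | zero => intro x; simp [Matrix.one_mulVec]
    | succ n ih =>
      intro x
      have key : α ^ (n + 1) * (Pmat P μ ^ (n + 1)).mulVec u x
          = α * ∑ y, Pmat P μ x y * (α ^ n * (Pmat P μ ^ n).mulVec u y) := by
        rw [pow_succ' (Pmat P μ) n, ← Matrix.mulVec_mulVec]
        rw [Matrix.mulVec, dotProduct, Finset.mul_sum, Finset.mul_sum]
        refine Finset.sum_congr rfl fun y _ => ?_
        rw [pow_succ]
        ring
      rw [key]
      have hmono : ∑ y, Pmat P μ x y * (α ^ n * (Pmat P μ ^ n).mulVec u y)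
          ≤ ∑ y, Pmat P μ x y * u y := by
        refine Finset.sum_le_sum fun y _ => ?_
        exact mul_le_mul_of_nonneg_left (ih y) (hP0 x (μ x) y)
      have := hstep x
      have h3 : α * ∑ y, Pmat P μ x y * (α ^ n * (Pmat P μ ^ n).mulVec u y)
          ≤ α * ∑ y, Pmat P μ x y * u y :=
        mul_le_mul_of_nonneg_left hmono hα0.le
      have h4 : α * ∑ y, Pmat P μ x y * u y = α * (Pmat P μ).mulVec u x := by
        simp [Matrix.mulVec, dotProduct]
      linarith
  intro x
  set C : ℝ := ∑ y, |u y| with hC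
  have hvC : ∀ y, |u y| ≤ C := fun y =>
    Finset.single_le_sum (f := fun y => |u y|) (fun z _ => abs_nonneg _) (Finset.mem_univ y)
  have hlow : ∀ n : ℕ, -(α ^ n * C) ≤ u x := by
    intro n
    have hb := aux_mulVec_bound (aux_pow_stoch (μ := μ) hP0 hP1 n).1
      (aux_pow_stoch (μ := μ) hP0 hP1 n).2 hvC x
    have h5 : -(C) ≤ (Pmat P μ ^ n).mulVec u x := (abs_le.mp hb).1
    have h6 : α ^ n * (-(C)) ≤ α ^ n * (Pmat P μ ^ n).mulVec u x :=
      mul_le_mul_of_nonneg_left h5 (pow_nonneg hα0.le n)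
    have := hiter n x
    nlinarith
  have hten : Filter.Tendsto (fun n : ℕ => -(α ^ n * C)) Filter.atTop (nhds 0) := by
    have := tendsto_pow_atTop_nhds_zero_of_lt_one hα0.le hα1
    have := (this.mul_const C).neg
    simpa using this
  have : (0 : ℝ) ≤ u x := le_of_tendsto hten (Filter.Eventually.of_forall hlow)
  simp only [hu] at this
  linarith

end Aux

theorem stmt_13 {S A : Type*} [Fintype S] [Nonempty S] [DecidableEq S] [Fintype A] [Nonempty A]
    (P : S → A → S → ℝ) (g : S → A → ℝ) (α : ℝ)
    (hP0 : ∀ x a y, 0 ≤ P x a y) (hP1 : ∀ x a, ∑ y, P x a y = 1)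
    (hα0 : 0 < α) (hα1 : α < 1)
    (Jstar : S → ℝ) (hJstar : Tbell P g α Jstar = Jstar)
    (μ μ' : S → A)
    (hgreedy : Tpol P g α μ' (Jval P g α μ) = Tbell P g α (Jval P g α μ))
    (hnotopt : Jval P g α μ ≠ Jstar) :
    (∀ x : S, Jval P g α μ' x ≤ Jval P g α μ x) ∧ Jval P g α μ' ≠ Jval P g α μ := by
  classical
  set Jμ := Jval P g α μ with hJμ
  -- T J ≤ Tpol ν J
  have hTle : ∀ (ν : S → A) (J : S → ℝ) (x : S), Tbell P g α J x ≤ Tpol P g α ν J x := by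
    intro ν J x
    exact Finset.inf'_le _ (Finset.mem_univ (ν x))
  have hfixμ := aux_Jval_fixed (g := g) (μ := μ) hP0 hP1 hα0 hα1
  have h1 : ∀ x, Tpol P g α μ' Jμ x ≤ Jμ x := by
    intro x
    calc Tpol P g α μ' Jμ x = Tbell P g α Jμ x := by rw [hgreedy]
      _ ≤ Tpol P g α μ Jμ x := hTle μ Jμ x
      _ = Jμ x := by rw [hfixμ]
  have part1 : ∀ x, Jval P g α μ' x ≤ Jμ x :=
    aux_comparison hP0 hP1 hα0 hα1 h1
  refine ⟨part1, ?_⟩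
  intro heq
  -- then Jμ is a fixed point of Tbell
  have hfixμ' := aux_Jval_fixed (g := g) (μ := μ') hP0 hP1 hα0 hα1
  have hTfix : Tbell P g α Jμ = Jμ := by
    rw [← hgreedy, ← heq]
    exact hfixμ'
  -- contraction: Jμ = Jstar
  apply hnotopt
  set D : ℝ := Finset.univ.sup' Finset.univ_nonempty (fun x => |Jμ x - Jstar x|) with hD
  have hDle : ∀ x, |Jμ x - Jstar x| ≤ D := fun x =>
    Finset.le_sup' (fun x => |Jμ x - Jstar x|) (Finset.mem_univ x)
  have hcontr : ∀ x, |Tbell P g α Jμ x - Tbell P g α Jstar x| ≤ α * D := by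
    intro x
    have hkey : ∀ a : A, |(g x a + α * ∑ y, P x a y * Jμ y)
        - (g x a + α * ∑ y, P x a y * Jstar y)| ≤ α * D := by
      intro a
      have : (g x a + α * ∑ y, P x a y * Jμ y) - (g x a + α * ∑ y, P x a y * Jstar y)
          = α * ∑ y, P x a y * (Jμ y - Jstar y) := by
        have hsub : ∑ y, P x a y * (Jμ y - Jstar y)
            = (∑ y, P x a y * Jμ y) - ∑ y, P x a y * Jstar y := by
          rw [← Finset.sum_sub_distrib]
          exact Finset.sum_congr rfl fun y _ => by ring
        rw [hsub]
        ring
      rw [this, abs_mul, abs_of_nonneg hα0.le]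
      refine mul_le_mul_of_nonneg_left ?_ hα0.le
      calc |∑ y, P x a y * (Jμ y - Jstar y)| ≤ ∑ y, |P x a y * (Jμ y - Jstar y)| :=
            Finset.abs_sum_le_sum_abs _ _
        _ ≤ ∑ y, P x a y * D := by
            refine Finset.sum_le_sum fun y _ => ?_
            rw [abs_mul, abs_of_nonneg (hP0 x a y)]
            exact mul_le_mul_of_nonneg_left (hDle y) (hP0 x a y)
        _ = D := by rw [← Finset.sum_mul, hP1 x a, one_mul]
    -- |inf' f - inf' h| ≤ c
    rw [abs_sub_le_iff]
    constructor
    · obtain ⟨a0, _, ha0⟩ := Finset.exists_mem_eq_inf' (Finset.univ_nonempty (α := A))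
        (fun a : A => g x a + α * ∑ y, P x a y * Jstar y)
      have h5 : Tbell P g α Jμ x ≤ g x a0 + α * ∑ y, P x a0 y * Jμ y :=
        Finset.inf'_le _ (Finset.mem_univ a0)
      have h6 : Tbell P g α Jstar x = g x a0 + α * ∑ y, P x a0 y * Jstar y := ha0
      have h7 := (abs_le.mp (hkey a0)).2
      linarith
    · obtain ⟨a0, _, ha0⟩ := Finset.exists_mem_eq_inf' (Finset.univ_nonempty (α := A))
        (fun a : A => g x a + α * ∑ y, P x a y * Jμ y)
      have h5 : Tbell P g α Jstar x ≤ g x a0 + α * ∑ y, P x a0 y * Jstar y :=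
        Finset.inf'_le _ (Finset.mem_univ a0)
      have h6 : Tbell P g α Jμ x = g x a0 + α * ∑ y, P x a0 y * Jμ y := ha0
      have := (abs_le.mp (hkey a0)).1
      linarith
  have hDD : D ≤ α * D := by
    obtain ⟨x0, _, hx0⟩ := Finset.exists_mem_eq_sup' (Finset.univ_nonempty (α := S))
      (fun x => |Jμ x - Jstar x|)
    have hDx : D = |Jμ x0 - Jstar x0| := hx0
    have := hcontr x0
    rw [hTfix, hJstar] at this
    linarith
  have hD0 : 0 ≤ D := le_trans (abs_nonneg _) (hDle (Classical.arbitrary S))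
  have hDzero : D = 0 := by nlinarith
  funext x
  have := hDle x
  rw [hDzero] at this
  have : |Jμ x - Jstar x| = 0 := le_antisymm this (abs_nonneg _)
  have := abs_eq_zero.mp this
  linarith
end
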